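/- For A ∈ B(H) and B ∈ B(K), the equality w(A ⊗ B) = (1/2)‖A‖‖B‖ holds if and only if for every real θ, ‖e^{iθ} A ⊗ B + e^{−iθ} A* ⊗ B*‖ = ‖e^{iθ} A ⊗ B − e^{−iθ} A* ⊗ B*‖ = ‖A‖‖B‖. -/

import Mathlib

open ContinuousLinearMap

/-- Numerical radius: `w(T) = sup { |⟨Tx,x⟩| : ‖x‖ = 1 }`. -/
noncomputable def nrad {E : Type*} [NormedAddCommGroup E] [InnerProductSpace ℂ E]
    (T : E →L[ℂ] E) : ℝ :=
  ⨆ x : {x : E // ‖x‖ = 1}, ‖(inner ℂ (T x.1) x.1 : ℂ)‖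

/-- `tmul` realizes `E` as the Hilbert tensor product of `H` and `K`:
the inner product is multiplicative on elementary tensors and elementary
tensors span a dense subspace. -/
structure IsHilbertTensorMap
    {H K E : Type*} [NormedAddCommGroup H] [InnerProductSpace ℂ H]
    [NormedAddCommGroup K] [InnerProductSpace ℂ K]
    [NormedAddCommGroup E] [InnerProductSpace ℂ E]
    (tmul : H →ₗ[ℂ] K →ₗ[ℂ] E) : Prop where
  inner_tmul : ∀ (x z : H) (y w : K),
    (inner ℂ (tmul x y) (tmul z w) : ℂ) = (inner ℂ x z : ℂ) * (inner ℂ y w : ℂ)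
  dense_span :
    Dense ((Submodule.span ℂ (Set.range fun p : H × K => tmul p.1 p.2) : Submodule ℂ E) : Set E)

/-- `T` is the tensor product operator `A ⊗ B`, i.e. `T (x ⊗ y) = A x ⊗ B y`. -/
def IsTensorOp {H K E : Type*} [NormedAddCommGroup H] [InnerProductSpace ℂ H]
    [NormedAddCommGroup K] [InnerProductSpace ℂ K]
    [NormedAddCommGroup E] [InnerProductSpace ℂ E]
    (tmul : H →ₗ[ℂ] K →ₗ[ℂ] E)
    (A : H →L[ℂ] H) (B : K →L[ℂ] K) (T : E →L[ℂ] E) : Prop :=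
  ∀ (x : H) (y : K), T (tmul x y) = tmul (A x) (B y)

section aux
variable {E : Type*} [NormedAddCommGroup E] [InnerProductSpace ℂ E] [CompleteSpace E]

lemma nrad_nonneg' (T : E →L[ℂ] E) : 0 ≤ nrad T :=
  Real.iSup_nonneg fun _ => norm_nonneg _

lemma nrad_bdd' (T : E →L[ℂ] E) :
    BddAbove (Set.range fun x : {x : E // ‖x‖ = 1} => ‖(inner ℂ (T x.1) x.1 : ℂ)‖) := by
  refine ⟨‖T‖, ?_⟩
  rintro r ⟨x, rfl⟩
  calc ‖(inner ℂ (T x.1) x.1 : ℂ)‖ ≤ ‖T x.1‖ * ‖x.1‖ := norm_inner_le_norm _ _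
    _ ≤ (‖T‖ * ‖x.1‖) * ‖x.1‖ := by
        gcongr; exact T.le_opNorm x.1
    _ = ‖T‖ := by rw [x.2]; ring

lemma inner_le_nrad' (T : E →L[ℂ] E) (x : E) (hx : ‖x‖ = 1) :
    ‖(inner ℂ (T x) x : ℂ)‖ ≤ nrad T :=
  le_ciSup (nrad_bdd' T) ⟨x, hx⟩

lemma inner_le_nrad_sq (T : E →L[ℂ] E) (z : E) :
    ‖(inner ℂ (T z) z : ℂ)‖ ≤ nrad T * ‖z‖ ^ 2 := by
  rcases eq_or_ne z 0 with rfl | hz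
  · simp
  · have hz' : ‖z‖ ≠ 0 := norm_ne_zero_iff.2 hz
    have hx : ‖((‖z‖:ℂ)⁻¹) • z‖ = 1 := by
      rw [norm_smul, norm_inv, Complex.norm_real, norm_norm, inv_mul_cancel₀ hz']
    have h := inner_le_nrad' T _ hx
    rw [map_smul, inner_smul_left, inner_smul_right] at h
    rw [norm_mul, norm_mul] at h
    simp only [map_inv₀, Complex.conj_ofReal, norm_inv, Complex.norm_real, norm_norm] at h
    have hzpos : (0:ℝ) < ‖z‖ := lt_of_le_of_ne (norm_nonneg z) (Ne.symm hz')
    have hmul := mul_le_mul_of_nonneg_left h (by positivity : (0:ℝ) ≤ ‖z‖ * ‖z‖)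
    calc ‖(inner ℂ (T z) z : ℂ)‖
        = ‖z‖ * ‖z‖ * (‖z‖⁻¹ * (‖z‖⁻¹ * ‖(inner ℂ (T z) z : ℂ)‖)) := by
          field_simp
      _ ≤ ‖z‖ * ‖z‖ * nrad T := hmul
      _ = nrad T * ‖z‖ ^ 2 := by ring

lemma selfadjoint_norm_le_nrad (S : E →L[ℂ] E) (hS : ContinuousLinearMap.adjoint S = S) :
    ‖S‖ ≤ nrad S := by
  refine S.opNorm_le_bound (nrad_nonneg' S) fun u => ?_
  rcases eq_or_ne (S u) 0 with hSu | hSu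
  · rw [hSu, norm_zero]
    exact mul_nonneg (nrad_nonneg' S) (norm_nonneg u)
  have hu : u ≠ 0 := by rintro rfl; simp at hSu
  have hunorm : (0:ℝ) < ‖u‖ := norm_pos_iff.2 hu
  have hSunorm : (0:ℝ) < ‖S u‖ := norm_pos_iff.2 hSu
  set v : E := ((‖u‖ / ‖S u‖ : ℝ) : ℂ) • S u with hv
  have hvnorm : ‖v‖ = ‖u‖ := by
    rw [hv, norm_smul, Complex.norm_real, Real.norm_eq_abs, abs_of_pos (by positivity)]
    field_simp
  -- key polarization inequality
  have key : ∀ a b : E, 4 * Complex.re (inner ℂ (S a) b : ℂ) ≤ 2 * nrad S * (‖a‖^2 + ‖b‖^2) := by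
    intro a b
    have hsym : (inner ℂ (S b) a : ℂ) = (starRingEnd ℂ) (inner ℂ (S a) b : ℂ) := by
      rw [← hS]
      rw [ContinuousLinearMap.adjoint_inner_left]
      rw [← inner_conj_symm]
      rw [hS]
    have expand : ∀ c d : E, (inner ℂ (S (c + d)) (c + d) : ℂ)
        = inner ℂ (S c) c + inner ℂ (S c) d + inner ℂ (S d) c + inner ℂ (S d) d := by
      intro c d
      rw [map_add, inner_add_left, inner_add_right, inner_add_right]
      ring
    have expand' : (inner ℂ (S (a - b)) (a - b) : ℂ)
        = inner ℂ (S a) a - inner ℂ (S a) b - inner ℂ (S b) a + inner ℂ (S b) b := by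
      rw [map_sub, inner_sub_left, inner_sub_right, inner_sub_right]
      ring
    have h1 : Complex.re (inner ℂ (S (a + b)) (a + b) : ℂ) ≤ nrad S * ‖a + b‖^2 := by
      calc Complex.re (inner ℂ (S (a+b)) (a+b) : ℂ) ≤ ‖(inner ℂ (S (a+b)) (a+b) : ℂ)‖ := by
            simpa using Complex.re_le_norm (inner ℂ (S (a+b)) (a+b) : ℂ)
      _ ≤ nrad S * ‖a + b‖^2 := inner_le_nrad_sq S _
    have h2 : -Complex.re (inner ℂ (S (a - b)) (a - b) : ℂ) ≤ nrad S * ‖a - b‖^2 := by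
      calc -Complex.re (inner ℂ (S (a-b)) (a-b) : ℂ)
            ≤ |Complex.re (inner ℂ (S (a-b)) (a-b) : ℂ)| := neg_le_abs _
        _ ≤ ‖(inner ℂ (S (a-b)) (a-b) : ℂ)‖ := by
            simpa using Complex.abs_re_le_norm (inner ℂ (S (a-b)) (a-b) : ℂ)
        _ ≤ nrad S * ‖a - b‖^2 := inner_le_nrad_sq S _
    have hre : Complex.re (inner ℂ (S (a + b)) (a + b) : ℂ)
        - Complex.re (inner ℂ (S (a - b)) (a - b) : ℂ) = 4 * Complex.re (inner ℂ (S a) b : ℂ) := by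
      rw [expand a b, expand', hsym]
      simp only [Complex.add_re, Complex.sub_re, Complex.conj_re]
      ring
    have hpar : ‖a + b‖^2 + ‖a - b‖^2 = 2 * (‖a‖^2 + ‖b‖^2) := by
      have := @norm_add_sq ℂ E _ _ _ a b
      have := @norm_sub_sq ℂ E _ _ _ a b
      rw [norm_add_sq (𝕜 := ℂ), norm_sub_sq (𝕜 := ℂ)]
      ring
    nlinarith [h1, h2, mul_le_mul_of_nonneg_left (le_of_eq hpar) (nrad_nonneg' S)]
  have hkey := key u v
  have hinner : Complex.re (inner ℂ (S u) v : ℂ) = ‖u‖ * ‖S u‖ := by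
    rw [hv, inner_smul_right, Complex.re_ofReal_mul]
    have h2 : (inner ℂ (S u) (S u) : ℂ).re = ‖S u‖ * ‖S u‖ := by
      have h3 := @inner_self_eq_norm_mul_norm ℂ E _ _ _ (S u)
      simpa using h3
    rw [h2]
    field_simp
  rw [hinner, hvnorm] at hkey
  nlinarith [hkey, hunorm, hSunorm]

lemma inner_star_apply (T : E →L[ℂ] E) (x : E) :
    (inner ℂ ((ContinuousLinearMap.adjoint T) x) x : ℂ) = (starRingEnd ℂ) (inner ℂ (T x) x : ℂ) := by
  rw [ContinuousLinearMap.adjoint_inner_left, ← inner_conj_symm]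

end aux

section aux2
variable {E : Type*} [NormedAddCommGroup E] [InnerProductSpace ℂ E] [CompleteSpace E]

lemma inner_comb_add (T : E →L[ℂ] E) (c d : ℂ) (x : E) :
    (inner ℂ ((c • T + d • ContinuousLinearMap.adjoint T) x) x : ℂ)
      = (starRingEnd ℂ) c * (inner ℂ (T x) x : ℂ)
        + (starRingEnd ℂ) d * (starRingEnd ℂ) (inner ℂ (T x) x : ℂ) := by
  rw [ContinuousLinearMap.add_apply, ContinuousLinearMap.smul_apply,
    ContinuousLinearMap.smul_apply, inner_add_left, inner_smul_left, inner_smul_left,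
    inner_star_apply]

lemma inner_comb_sub (T : E →L[ℂ] E) (c d : ℂ) (x : E) :
    (inner ℂ ((c • T - d • ContinuousLinearMap.adjoint T) x) x : ℂ)
      = (starRingEnd ℂ) c * (inner ℂ (T x) x : ℂ)
        - (starRingEnd ℂ) d * (starRingEnd ℂ) (inner ℂ (T x) x : ℂ) := by
  rw [ContinuousLinearMap.sub_apply, ContinuousLinearMap.smul_apply,
    ContinuousLinearMap.smul_apply, inner_sub_left, inner_smul_left, inner_smul_left,
    inner_star_apply]

lemma adjoint_smul' (c : ℂ) (R : E →L[ℂ] E) :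
    ContinuousLinearMap.adjoint (c • R) = (starRingEnd ℂ) c • ContinuousLinearMap.adjoint R := by
  rw [← ContinuousLinearMap.star_eq_adjoint, ← ContinuousLinearMap.star_eq_adjoint, star_smul]
  rfl

lemma adjoint_add' (R S : E →L[ℂ] E) :
    ContinuousLinearMap.adjoint (R + S)
      = ContinuousLinearMap.adjoint R + ContinuousLinearMap.adjoint S := by
  rw [← ContinuousLinearMap.star_eq_adjoint, ← ContinuousLinearMap.star_eq_adjoint,
    ← ContinuousLinearMap.star_eq_adjoint, star_add]

lemma adjoint_sub' (R S : E →L[ℂ] E) :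
    ContinuousLinearMap.adjoint (R - S)
      = ContinuousLinearMap.adjoint R - ContinuousLinearMap.adjoint S := by
  rw [← ContinuousLinearMap.star_eq_adjoint, ← ContinuousLinearMap.star_eq_adjoint,
    ← ContinuousLinearMap.star_eq_adjoint, star_sub]

end aux2

lemma conj_exp_theta (θ : ℝ) :
    (starRingEnd ℂ) (Complex.exp (θ * Complex.I)) = Complex.exp (-(θ * Complex.I)) := by
  rw [← Complex.exp_conj]
  congr 1
  simp [Complex.conj_ofReal]

lemma norm_exp_theta (θ : ℝ) : ‖Complex.exp (θ * Complex.I)‖ = 1 := by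
  exact Complex.norm_exp_ofReal_mul_I θ

set_option maxHeartbeats 2000000 in
theorem stmt9
    {H K E : Type*} [NormedAddCommGroup H] [InnerProductSpace ℂ H] [CompleteSpace H]
    [NormedAddCommGroup K] [InnerProductSpace ℂ K] [CompleteSpace K]
    [NormedAddCommGroup E] [InnerProductSpace ℂ E] [CompleteSpace E]
    (tmul : H →ₗ[ℂ] K →ₗ[ℂ] E) (htmul : IsHilbertTensorMap tmul)
    (A : H →L[ℂ] H) (B : K →L[ℂ] K) (T : E →L[ℂ] E)
    (hT : IsTensorOp tmul A B T) :
    nrad T = (1 / 2) * (‖A‖ * ‖B‖) ↔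
      ∀ θ : ℝ,
        ‖Complex.exp (θ * Complex.I) • T +
            Complex.exp (-(θ * Complex.I)) • ContinuousLinearMap.adjoint T‖ = ‖A‖ * ‖B‖ ∧
        ‖Complex.exp (θ * Complex.I) • T -
            Complex.exp (-(θ * Complex.I)) • ContinuousLinearMap.adjoint T‖ = ‖A‖ * ‖B‖ := by
  set M : ℝ := ‖A‖ * ‖B‖ with hM
  have hMnn : (0:ℝ) ≤ M := by positivity
  -- norm on elementary tensors
  have hnt : ∀ (x : H) (y : K), ‖tmul x y‖ = ‖x‖ * ‖y‖ := by
    intro x y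
    have h1 : (inner ℂ (tmul x y) (tmul x y) : ℂ) = (inner ℂ x x : ℂ) * (inner ℂ y y : ℂ) :=
      htmul.inner_tmul x x y y
    have h2 := congrArg norm h1
    rw [norm_mul] at h2
    simp only [inner_self_eq_norm_sq_to_K, norm_pow, RCLike.norm_ofReal, abs_norm] at h2
    have h4 : ‖tmul x y‖ = Real.sqrt (‖x‖ ^ 2 * ‖y‖ ^ 2) := by
      rw [← h2, Real.sqrt_sq (norm_nonneg _)]
    rw [h4, ← mul_pow, Real.sqrt_sq (by positivity)]
  -- M ≤ ‖T‖
  have hTapp : ∀ (x : H) (y : K), ‖A x‖ * ‖B y‖ ≤ ‖T‖ * (‖x‖ * ‖y‖) := by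
    intro x y
    calc ‖A x‖ * ‖B y‖ = ‖tmul (A x) (B y)‖ := (hnt _ _).symm
      _ = ‖T (tmul x y)‖ := by rw [hT x y]
      _ ≤ ‖T‖ * ‖tmul x y‖ := T.le_opNorm _
      _ = ‖T‖ * (‖x‖ * ‖y‖) := by rw [hnt]
  have hA1 : ∀ y : K, ‖A‖ * ‖B y‖ ≤ ‖T‖ * ‖y‖ := by
    intro y
    have h5 : ‖(‖B y‖ : ℝ) • A‖ ≤ ‖T‖ * ‖y‖ := by
      apply ContinuousLinearMap.opNorm_le_bound _ (by positivity)
      intro x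
      rw [ContinuousLinearMap.smul_apply, norm_smul, Real.norm_eq_abs, abs_norm]
      calc ‖B y‖ * ‖A x‖ = ‖A x‖ * ‖B y‖ := mul_comm _ _
        _ ≤ ‖T‖ * (‖x‖ * ‖y‖) := hTapp x y
        _ = ‖T‖ * ‖y‖ * ‖x‖ := by ring
    rw [norm_smul, Real.norm_eq_abs, abs_norm] at h5
    linarith [h5]
  have hTge : M ≤ ‖T‖ := by
    have h6 : ‖(‖A‖ : ℝ) • B‖ ≤ ‖T‖ := by
      apply ContinuousLinearMap.opNorm_le_bound _ (norm_nonneg T)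
      intro y
      rw [ContinuousLinearMap.smul_apply, norm_smul, Real.norm_eq_abs, abs_norm]
      exact hA1 y
    rw [norm_smul, Real.norm_eq_abs, abs_norm] at h6
    exact h6
  -- self-adjointness facts
  have hSadj : ∀ θ : ℝ,
      ContinuousLinearMap.adjoint
          (Complex.exp (θ * Complex.I) • T +
            Complex.exp (-(θ * Complex.I)) • ContinuousLinearMap.adjoint T)
        = Complex.exp (θ * Complex.I) • T +
            Complex.exp (-(θ * Complex.I)) • ContinuousLinearMap.adjoint T := by
    intro θ
    have hcc : (starRingEnd ℂ) (Complex.exp (-(θ * Complex.I))) = Complex.exp (θ * Complex.I) := by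
      rw [← conj_exp_theta θ, Complex.conj_conj]
    rw [adjoint_add', adjoint_smul', adjoint_smul', ContinuousLinearMap.adjoint_adjoint,
      conj_exp_theta, hcc]
    exact add_comm _ _
  -- ∀ x unit, |inner ℂ (T x) x| ≤ nrad T bounds etc.
  -- the "plus" operator bounded by 2 * nrad T
  have hSnorm_le : ∀ θ : ℝ,
      ‖Complex.exp (θ * Complex.I) • T +
          Complex.exp (-(θ * Complex.I)) • ContinuousLinearMap.adjoint T‖ ≤ 2 * nrad T := by
    intro θ
    set S := Complex.exp (θ * Complex.I) • T +
        Complex.exp (-(θ * Complex.I)) • ContinuousLinearMap.adjoint T with hS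
    refine (selfadjoint_norm_le_nrad S (hSadj θ)).trans ?_
    refine Real.iSup_le ?_ (by linarith [nrad_nonneg' T])
    rintro ⟨x, hx⟩
    set t : ℂ := inner ℂ (T x) x with ht
    have hin : (inner ℂ (S x) x : ℂ)
        = (starRingEnd ℂ) (Complex.exp (θ * Complex.I)) * t
          + (starRingEnd ℂ) (Complex.exp (-(θ * Complex.I))) * (starRingEnd ℂ) t := by
      rw [hS]; exact inner_comb_add T _ _ x
    have hz : (inner ℂ (S x) x : ℂ) = (starRingEnd ℂ) (Complex.exp (θ * Complex.I)) * t
        + (starRingEnd ℂ) ((starRingEnd ℂ) (Complex.exp (θ * Complex.I)) * t) := by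
      rw [hin, ← conj_exp_theta θ, map_mul]
    calc ‖(inner ℂ (S x) x : ℂ)‖
        ≤ 2 * ‖(starRingEnd ℂ) (Complex.exp (θ * Complex.I)) * t‖ := by
          rw [hz, Complex.add_conj]
          rw [Complex.norm_real, Real.norm_eq_abs, abs_mul, _root_.abs_two]
          have := Complex.abs_re_le_norm ((starRingEnd ℂ) (Complex.exp (θ * Complex.I)) * t)
          nlinarith [this]
      _ = 2 * ‖t‖ := by
          rw [norm_mul, RCLike.norm_conj, norm_exp_theta, one_mul]
      _ ≤ 2 * nrad T := by
          have := inner_le_nrad' T x hx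
          rw [← ht] at this
          linarith
  -- the "minus" operator bounded by 2 * nrad T
  have hDnorm_le : ∀ θ : ℝ,
      ‖Complex.exp (θ * Complex.I) • T -
          Complex.exp (-(θ * Complex.I)) • ContinuousLinearMap.adjoint T‖ ≤ 2 * nrad T := by
    intro θ
    set D := Complex.exp (θ * Complex.I) • T -
        Complex.exp (-(θ * Complex.I)) • ContinuousLinearMap.adjoint T with hD
    have hDadj : ContinuousLinearMap.adjoint (Complex.I • D) = Complex.I • D := by
      have hcc : (starRingEnd ℂ) (Complex.exp (-(θ * Complex.I))) = Complex.exp (θ * Complex.I) := by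
        rw [← conj_exp_theta θ, Complex.conj_conj]
      rw [adjoint_smul', hD, adjoint_sub', adjoint_smul', adjoint_smul',
        ContinuousLinearMap.adjoint_adjoint, conj_exp_theta, hcc, Complex.conj_I]
      module
    have hInorm : ‖D‖ = ‖Complex.I • D‖ := by
      rw [norm_smul, Complex.norm_I, one_mul]
    rw [hInorm]
    refine (selfadjoint_norm_le_nrad _ hDadj).trans ?_
    refine Real.iSup_le ?_ (by linarith [nrad_nonneg' T])
    rintro ⟨x, hx⟩
    set t : ℂ := inner ℂ (T x) x with ht
    have hin : (inner ℂ ((Complex.I • D) x) x : ℂ)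
        = (starRingEnd ℂ) Complex.I * (inner ℂ (D x) x : ℂ) := by
      rw [ContinuousLinearMap.smul_apply, inner_smul_left]
    have hDin : (inner ℂ (D x) x : ℂ)
        = (starRingEnd ℂ) (Complex.exp (θ * Complex.I)) * t
          - (starRingEnd ℂ) ((starRingEnd ℂ) (Complex.exp (θ * Complex.I)) * t) := by
      rw [hD, inner_comb_sub, ← ht, ← conj_exp_theta θ, map_mul]
    calc ‖(inner ℂ ((Complex.I • D) x) x : ℂ)‖
        = ‖(inner ℂ (D x) x : ℂ)‖ := by
          rw [hin, norm_mul, RCLike.norm_conj, Complex.norm_I, one_mul]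
      _ ≤ 2 * ‖(starRingEnd ℂ) (Complex.exp (θ * Complex.I)) * t‖ := by
          rw [hDin, Complex.sub_conj]
          rw [norm_mul, Complex.norm_I, mul_one, Complex.norm_real, Real.norm_eq_abs,
            abs_mul, _root_.abs_two]
          have := Complex.abs_im_le_norm ((starRingEnd ℂ) (Complex.exp (θ * Complex.I)) * t)
          nlinarith [this]
      _ = 2 * ‖t‖ := by
          rw [norm_mul, RCLike.norm_conj, norm_exp_theta, one_mul]
      _ ≤ 2 * nrad T := by
          have := inner_le_nrad' T x hx
          rw [← ht] at this
          linarith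
  -- triangle lower bound
  have hsum_ge : ∀ θ : ℝ,
      2 * M ≤ ‖Complex.exp (θ * Complex.I) • T +
          Complex.exp (-(θ * Complex.I)) • ContinuousLinearMap.adjoint T‖
        + ‖Complex.exp (θ * Complex.I) • T -
          Complex.exp (-(θ * Complex.I)) • ContinuousLinearMap.adjoint T‖ := by
    intro θ
    have hsd : (Complex.exp (θ * Complex.I) • T +
          Complex.exp (-(θ * Complex.I)) • ContinuousLinearMap.adjoint T)
        + (Complex.exp (θ * Complex.I) • T -
          Complex.exp (-(θ * Complex.I)) • ContinuousLinearMap.adjoint T)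
        = (2 * Complex.exp (θ * Complex.I)) • T := by
      module
    have htri := norm_add_le
      (Complex.exp (θ * Complex.I) • T +
          Complex.exp (-(θ * Complex.I)) • ContinuousLinearMap.adjoint T)
      (Complex.exp (θ * Complex.I) • T -
          Complex.exp (-(θ * Complex.I)) • ContinuousLinearMap.adjoint T)
    have h2c : ‖(2:ℂ)‖ = 2 := by norm_num
    rw [hsd, norm_smul, norm_mul, norm_exp_theta, h2c, mul_one] at htri
    have h2T : 2 * M ≤ 2 * ‖T‖ := by linarith [hTge]
    linarith
  constructor
  · intro h θ
    have hS := hSnorm_le θ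
    have hD := hDnorm_le θ
    rw [h] at hS hD
    have h' : 2 * ((1/2) * M) = M := by ring
    rw [h'] at hS hD
    have := hsum_ge θ
    constructor <;> linarith
  · intro h
    have le1 : nrad T ≤ (1/2) * M := by
      refine Real.iSup_le ?_ (by positivity)
      rintro ⟨x, hx⟩
      set t : ℂ := inner ℂ (T x) x with ht
      set θ : ℝ := t.arg with hθ
      set S := Complex.exp (θ * Complex.I) • T +
          Complex.exp (-(θ * Complex.I)) • ContinuousLinearMap.adjoint T with hS
      have hSnorm : ‖S‖ = M := (h θ).1
      have hc1 : (starRingEnd ℂ) (Complex.exp (θ * Complex.I)) * t = (‖t‖ : ℂ) := by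
        conv_lhs => rw [← Complex.norm_mul_exp_arg_mul_I t]
        rw [← hθ, mul_comm ((‖t‖ : ℂ)) _, ← mul_assoc, mul_comm ((starRingEnd ℂ) _) _,
          Complex.mul_conj, Complex.normSq_eq_norm_sq]
        rw [show ‖Complex.exp (θ * Complex.I)‖ = 1 from Complex.norm_exp_ofReal_mul_I θ]
        simp
      have hin : (inner ℂ (S x) x : ℂ) = ((2 * ‖t‖ : ℝ) : ℂ) := by
        rw [hS, inner_comb_add, ← ht, ← conj_exp_theta θ, Complex.conj_conj,
          mul_comm (Complex.exp (θ * Complex.I)) ((starRingEnd ℂ) t)]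
        rw [show (starRingEnd ℂ) t * Complex.exp (θ * Complex.I)
              = (starRingEnd ℂ) ((starRingEnd ℂ) (Complex.exp (θ * Complex.I)) * t) by
            rw [map_mul, Complex.conj_conj, mul_comm]]
        rw [hc1]
        push_cast
        rw [Complex.conj_ofReal]
        ring
      have hle : 2 * ‖t‖ ≤ M := by
        have h1 : ‖(inner ℂ (S x) x : ℂ)‖ ≤ ‖S‖ := by
          calc ‖(inner ℂ (S x) x : ℂ)‖ ≤ ‖S x‖ * ‖x‖ := norm_inner_le_norm _ _
            _ ≤ (‖S‖ * ‖x‖) * ‖x‖ := by gcongr; exact S.le_opNorm x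
            _ = ‖S‖ := by rw [hx]; ring
        rw [hin, Complex.norm_real, Real.norm_eq_abs] at h1
        rw [hSnorm] at h1
        have habs : |(2 * ‖t‖ : ℝ)| = 2 * ‖t‖ :=
          abs_of_nonneg (by positivity)
        rw [habs] at h1
        exact h1
      have : ‖t‖ = ‖t‖ := rfl
      rw [this]
      linarith
    have le2 : (1/2) * M ≤ nrad T := by
      have h0 := (h 0).1
      have hz : ((0:ℝ) : ℂ) * Complex.I = 0 := by simp
      rw [hz, neg_zero, Complex.exp_zero, one_smul, one_smul] at h0
      set S0 := T + ContinuousLinearMap.adjoint T with hS0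
      have hadj0 : ContinuousLinearMap.adjoint S0 = S0 := by
        rw [hS0, adjoint_add', ContinuousLinearMap.adjoint_adjoint, add_comm]
      have hb : nrad S0 ≤ 2 * nrad T := by
        refine Real.iSup_le ?_ (by linarith [nrad_nonneg' T])
        rintro ⟨x, hx⟩
        have hin : (inner ℂ (S0 x) x : ℂ)
            = (inner ℂ (T x) x : ℂ) + (starRingEnd ℂ) (inner ℂ (T x) x : ℂ) := by
          rw [hS0, ContinuousLinearMap.add_apply, inner_add_left, inner_star_apply]
        calc ‖(inner ℂ (S0 x) x : ℂ)‖ ≤ 2 * ‖(inner ℂ (T x) x : ℂ)‖ := by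
              rw [hin, Complex.add_conj, Complex.norm_real, Real.norm_eq_abs, abs_mul, _root_.abs_two]
              have h9 := Complex.abs_re_le_norm (inner ℂ (T x) x : ℂ)
              nlinarith [h9]
          _ ≤ 2 * nrad T := by linarith [inner_le_nrad' T x hx]
      have h10 := selfadjoint_norm_le_nrad S0 hadj0
      rw [h0] at h10
      linarith
    linarith [le1, le2]
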